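/- Let α ω β ν : ℝ with α ≠ 0 and let Q : ℂ. Define E : ℂ → ℂ for z ≠ 0 by E z = Q * (‖z‖ ^ (β / α) : ℝ) * Complex.exp (Complex.I * (ν / α) * Real.log ‖z‖). Then for every t : ℝ and every z : ℂ with z ≠ 0, E (Complex.exp ((α + ω * Complex.I) * t) * z) = Complex.exp ((β + ν * Complex.I) * t) * E z. -/

import Mathlib

/-- The fractional graph `ℰ(z) = Q |z|^{β/α} e^{i(ν/α) log|z|}` is equivariant under
the linear flows `z ↦ e^{(α+iω)t} z` and `w ↦ e^{(β+iν)t} w`. -/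
theorem stmt_2 (α ω β ν : ℝ) (hα : α ≠ 0) (Q : ℂ)
    (E : ℂ → ℂ)
    (hE : ∀ z : ℂ, z ≠ 0 →
      E z = Q * ((‖z‖ ^ (β / α) : ℝ) : ℂ)
        * Complex.exp (Complex.I * ((ν / α : ℝ) : ℂ) * ((Real.log ‖z‖ : ℝ) : ℂ))) :
    ∀ (t : ℝ) (z : ℂ), z ≠ 0 →
      E (Complex.exp (((α : ℂ) + (ω : ℂ) * Complex.I) * (t : ℂ)) * z)
        = Complex.exp (((β : ℂ) + (ν : ℂ) * Complex.I) * (t : ℂ)) * E z := by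
  intro t z hz
  have hez : Complex.exp (((α : ℂ) + (ω : ℂ) * Complex.I) * (t : ℂ)) ≠ 0 :=
    Complex.exp_ne_zero _
  have hnz : Complex.exp (((α : ℂ) + (ω : ℂ) * Complex.I) * (t : ℂ)) * z ≠ 0 :=
    mul_ne_zero hez hz
  rw [hE _ hnz, hE z hz]
  -- norm of the flow factor
  have hnorm : ‖Complex.exp (((α : ℂ) + (ω : ℂ) * Complex.I) * (t : ℂ))‖
      = Real.exp (α * t) := by
    rw [Complex.norm_exp]
    congr 1
    simp [add_mul, Complex.mul_re, Complex.mul_im]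
  have hnorm2 : ‖Complex.exp (((α : ℂ) + (ω : ℂ) * Complex.I) * (t : ℂ)) * z‖
      = Real.exp (α * t) * ‖z‖ := by
    rw [norm_mul, hnorm]
  have hzpos : (0:ℝ) < ‖z‖ := norm_pos_iff.mpr hz
  have hlog : Real.log ‖Complex.exp (((α : ℂ) + (ω : ℂ) * Complex.I) * (t : ℂ)) * z‖
      = α * t + Real.log ‖z‖ := by
    rw [hnorm2, Real.log_mul (Real.exp_ne_zero _) (ne_of_gt hzpos), Real.log_exp]
  have hrpow : (‖Complex.exp (((α : ℂ) + (ω : ℂ) * Complex.I) * (t : ℂ)) * z‖ ^ (β / α) : ℝ)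
      = Real.exp (β * t) * (‖z‖ ^ (β / α) : ℝ) := by
    rw [hnorm2, Real.mul_rpow (Real.exp_pos _).le hzpos.le, ← Real.exp_mul]
    congr 2
    field_simp
  rw [hrpow, hlog]
  push_cast
  rw [show (Complex.I * ((ν:ℂ) / (α:ℂ)) * ((α:ℂ) * (t:ℂ) + (Real.log ‖z‖ : ℂ)))
      = (ν:ℂ) * (t:ℂ) * Complex.I + Complex.I * ((ν:ℂ)/(α:ℂ)) * (Real.log ‖z‖ : ℂ) by
    have : (α:ℂ) ≠ 0 := Complex.ofReal_ne_zero.mpr hα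
    field_simp]
  rw [Complex.exp_add, add_mul, Complex.exp_add, show ((β:ℂ))*(t:ℂ) = ((β*t:ℝ):ℂ) by push_cast; ring, ← Complex.ofReal_exp]
  push_cast
  ring
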